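/- Let B, C, D be three non-collinear points of the Euclidean plane ℝ², let O be the circumcenter and r the circumradius of triangle BCD. Let A be a point such that A and D lie strictly on opposite sides of the line through B and C. If dist(A, O) > r (A is strictly outside the circumcircle of BCD), then ∠BAC + ∠BDC < π, where ∠BAC denotes the undirected angle at A between rays AB and AC, valued in [0, π], and similarly for ∠BDC. -/

import Mathlib

open Real EuclideanGeometry

set_option maxHeartbeats 1000000


lemma key_ineq (p q u v : ℝ) (hu : u ≠ 0) (hv : v ≠ 0)
    (h : 0 < p * |v| + q * |u|) :
    0 < p * Real.sqrt (q ^ 2 + v ^ 2) + q * Real.sqrt (p ^ 2 + u ^ 2) := by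
  have hu' : 0 < |u| := abs_pos.mpr hu
  have hv' : 0 < |v| := abs_pos.mpr hv
  set S1 : ℝ := Real.sqrt (q ^ 2 + v ^ 2) with hS1
  set S2 : ℝ := Real.sqrt (p ^ 2 + u ^ 2) with hS2
  have hS1sq : S1 ^ 2 = q ^ 2 + v ^ 2 := Real.sq_sqrt (by positivity)
  have hS2sq : S2 ^ 2 = p ^ 2 + u ^ 2 := Real.sq_sqrt (by positivity)
  have hS1pos : 0 < S1 := Real.sqrt_pos.mpr (by positivity)
  have hS2pos : 0 < S2 := Real.sqrt_pos.mpr (by positivity)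
  rcases le_or_gt p 0 with hp | hp
  · have hq : 0 < q := by nlinarith
    have hnn : 0 ≤ -p * |v| := mul_nonneg (neg_nonneg.mpr hp) (abs_nonneg v)
    have h1 : -p * |v| < q * |u| := by nlinarith
    have h2sq : (-p * |v|) ^ 2 < (q * |u|) ^ 2 :=
      pow_lt_pow_left₀ h1 hnn two_ne_zero
    have e1 : (-p * |v|) ^ 2 = p ^ 2 * v ^ 2 := by rw [mul_pow, sq_abs]; ring
    have e2 : (q * |u|) ^ 2 = q ^ 2 * u ^ 2 := by rw [mul_pow, sq_abs]
    have h2 : (-(p * S1)) ^ 2 < (q * S2) ^ 2 := by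
      rw [neg_pow, mul_pow, mul_pow, hS1sq, hS2sq]; nlinarith
    have h3 : -(p * S1) < q * S2 :=
      (pow_lt_pow_iff_left₀ (by nlinarith [mul_nonneg (neg_nonneg.mpr hp) hS1pos.le])
        (by positivity) two_ne_zero).mp h2
    linarith
  · rcases le_or_gt q 0 with hq | hq
    · have hnn : 0 ≤ -q * |u| := mul_nonneg (neg_nonneg.mpr hq) (abs_nonneg u)
      have h1 : -q * |u| < p * |v| := by nlinarith
      have h2sq : (-q * |u|) ^ 2 < (p * |v|) ^ 2 :=
        pow_lt_pow_left₀ h1 hnn two_ne_zero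
      have e1 : (-q * |u|) ^ 2 = q ^ 2 * u ^ 2 := by rw [mul_pow, sq_abs]; ring
      have e2 : (p * |v|) ^ 2 = p ^ 2 * v ^ 2 := by rw [mul_pow, sq_abs]
      have h2 : (-(q * S2)) ^ 2 < (p * S1) ^ 2 := by
        rw [neg_pow, mul_pow, mul_pow, hS1sq, hS2sq]; nlinarith
      have h3 : -(q * S2) < p * S1 :=
        (pow_lt_pow_iff_left₀ (by nlinarith [mul_nonneg (neg_nonneg.mpr hq) hS2pos.le])
          (by positivity) two_ne_zero).mp h2
      linarith
    · positivity

theorem outside_circumcircle_angle_sum_lt_pi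
    (A B C D O : EuclideanSpace ℝ (Fin 2)) (r : ℝ)
    (hncol : ¬ Collinear ℝ ({B, C, D} : Set (EuclideanSpace ℝ (Fin 2))))
    (hB : dist B O = r) (hC : dist C O = r) (hD : dist D O = r)
    (hside : (affineSpan ℝ ({B, C} : Set (EuclideanSpace ℝ (Fin 2)))).SOppSide A D)
    (hout : dist A O > r) :
    ∠ B A C + ∠ B D C < π := by
  obtain ⟨w0, hw0⟩ : ∃ x : ℝ, x = C 0 - B 0 := ⟨_, rfl⟩
  obtain ⟨w1, hw1⟩ : ∃ x : ℝ, x = C 1 - B 1 := ⟨_, rfl⟩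
  have hBC : B ≠ C := by
    rintro rfl
    exact hncol (by simpa using collinear_pair ℝ B D)
  have hAs : A ∉ line[ℝ, B, C] := hside.2.1
  have hDs : D ∉ line[ℝ, B, C] := hside.2.2
  have memiff : ∀ X : EuclideanSpace ℝ (Fin 2),
      X ∈ line[ℝ, B, C] ↔ ∃ t : ℝ, t • (C -ᵥ B) = X -ᵥ B := by
    intro X
    rw [← AffineSubspace.vsub_right_mem_direction_iff_mem (left_mem_affineSpan_pair ℝ B C),
      direction_affineSpan, mem_vectorSpan_pair_rev]
  have hwne : w0 ≠ 0 ∨ w1 ≠ 0 := by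
    by_contra hcon
    push_neg at hcon
    apply hBC
    ext i
    fin_cases i
    · have := hcon.1; simp only [hw0] at this; dsimp; linarith
    · have := hcon.2; simp only [hw1] at this; dsimp; linarith
  have hL : 0 < w0 ^ 2 + w1 ^ 2 := by
    rcases hwne with h | h
    · positivity
    · positivity
  have hv_mem : ∀ X : EuclideanSpace ℝ (Fin 2),
      w0 * (X 1 - B 1) - w1 * (X 0 - B 0) = 0 → X ∈ line[ℝ, B, C] := by
    intro X hX
    rw [memiff]
    refine ⟨((X 0 - B 0) * w0 + (X 1 - B 1) * w1) / (w0 ^ 2 + w1 ^ 2), ?_⟩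
    ext i
    fin_cases i
    · show ((X 0 - B 0) * w0 + (X 1 - B 1) * w1) / (w0 ^ 2 + w1 ^ 2) * (C 0 - B 0)
        = X 0 - B 0
      rw [div_mul_eq_mul_div, div_eq_iff hL.ne']
      simp only [← hw0]
      linear_combination w1 * hX
    · show ((X 0 - B 0) * w0 + (X 1 - B 1) * w1) / (w0 ^ 2 + w1 ^ 2) * (C 1 - B 1)
        = X 1 - B 1
      rw [div_mul_eq_mul_div, div_eq_iff hL.ne']
      simp only [← hw1]
      linear_combination (-w0) * hX
  -- signed side values
  obtain ⟨vA, hvAdef⟩ : ∃ x : ℝ, x = w0 * (A 1 - B 1) - w1 * (A 0 - B 0) := ⟨_, rfl⟩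
  obtain ⟨vD, hvDdef⟩ : ∃ x : ℝ, x = w0 * (D 1 - B 1) - w1 * (D 0 - B 0) := ⟨_, rfl⟩
  obtain ⟨vO, hvOdef⟩ : ∃ x : ℝ, x = w0 * (O 1 - B 1) - w1 * (O 0 - B 0) := ⟨_, rfl⟩
  have hvA : vA ≠ 0 := fun h => hAs (hv_mem A (by rw [← hvAdef]; exact h))
  have hvD : vD ≠ 0 := fun h => hDs (hv_mem D (by rw [← hvDdef]; exact h))
  -- opposite sides gives vA * vD < 0
  have hvAvD : vA * vD < 0 := by
    obtain ⟨⟨p₁, hp₁, p₂, hp₂, hray⟩, -, -⟩ := hside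
    obtain ⟨t₁, ht₁⟩ := (memiff p₁).mp hp₁
    obtain ⟨t₂, ht₂⟩ := (memiff p₂).mp hp₂
    have hAne : A -ᵥ p₁ ≠ 0 := by
      rw [vsub_ne_zero]
      rintro rfl
      exact hAs hp₁
    have hDne : p₂ -ᵥ D ≠ 0 := by
      rw [vsub_ne_zero]
      rintro rfl
      exact hDs hp₂
    obtain ⟨s₁, s₂, hs₁, hs₂, heq⟩ := hray.exists_pos hAne hDne
    have hp10 : p₁ 0 = t₁ * w0 + B 0 := by
      have := congrArg (fun v : EuclideanSpace ℝ (Fin 2) => v 0) ht₁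
      simp only [PiLp.smul_apply, smul_eq_mul] at this
      simp only [hw0]
      have h2 : t₁ * ((C -ᵥ B) 0) = (p₁ -ᵥ B) 0 := this
      simp only [vsub_eq_sub, PiLp.sub_apply] at h2
      linarith
    have hp11 : p₁ 1 = t₁ * w1 + B 1 := by
      have := congrArg (fun v : EuclideanSpace ℝ (Fin 2) => v 1) ht₁
      simp only [PiLp.smul_apply, smul_eq_mul] at this
      simp only [hw1]
      have h2 : t₁ * ((C -ᵥ B) 1) = (p₁ -ᵥ B) 1 := this
      simp only [vsub_eq_sub, PiLp.sub_apply] at h2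
      linarith
    have hp20 : p₂ 0 = t₂ * w0 + B 0 := by
      have := congrArg (fun v : EuclideanSpace ℝ (Fin 2) => v 0) ht₂
      simp only [PiLp.smul_apply, smul_eq_mul] at this
      simp only [hw0]
      have h2 : t₂ * ((C -ᵥ B) 0) = (p₂ -ᵥ B) 0 := this
      simp only [vsub_eq_sub, PiLp.sub_apply] at h2
      linarith
    have hp21 : p₂ 1 = t₂ * w1 + B 1 := by
      have := congrArg (fun v : EuclideanSpace ℝ (Fin 2) => v 1) ht₂
      simp only [PiLp.smul_apply, smul_eq_mul] at this
      simp only [hw1]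
      have h2 : t₂ * ((C -ᵥ B) 1) = (p₂ -ᵥ B) 1 := this
      simp only [vsub_eq_sub, PiLp.sub_apply] at h2
      linarith
    have e0 : s₁ * (A 0 - p₁ 0) = s₂ * (p₂ 0 - D 0) := by
      have := congrArg (fun v : EuclideanSpace ℝ (Fin 2) => v 0) heq
      simp only [PiLp.smul_apply, smul_eq_mul] at this
      have h2 : s₁ * ((A -ᵥ p₁) 0) = s₂ * ((p₂ -ᵥ D) 0) := this
      simp only [vsub_eq_sub, PiLp.sub_apply] at h2
      linarith
    have e1 : s₁ * (A 1 - p₁ 1) = s₂ * (p₂ 1 - D 1) := by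
      have := congrArg (fun v : EuclideanSpace ℝ (Fin 2) => v 1) heq
      simp only [PiLp.smul_apply, smul_eq_mul] at this
      have h2 : s₁ * ((A -ᵥ p₁) 1) = s₂ * ((p₂ -ᵥ D) 1) := this
      simp only [vsub_eq_sub, PiLp.sub_apply] at h2
      linarith
    rw [hp10, hp20] at e0
    rw [hp11, hp21] at e1
    have hkey : s₁ * vA = -(s₂ * vD) := by
      simp only [hvAdef, hvDdef]
      linear_combination w0 * e1 - w1 * e0
    have hvD2 : 0 < vD ^ 2 := lt_of_le_of_ne (sq_nonneg vD) (Ne.symm (pow_ne_zero 2 hvD))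
    have hmul : s₁ * (vA * vD) = -(s₂ * vD ^ 2) := by linear_combination vD * hkey
    by_contra hcon
    push_neg at hcon
    nlinarith [mul_nonneg hs₁.le hcon, mul_pos hs₂ hvD2]
  -- distance squares in coordinates
  have dist_sq : ∀ X Y : EuclideanSpace ℝ (Fin 2),
      dist X Y ^ 2 = (X 0 - Y 0) ^ 2 + (X 1 - Y 1) ^ 2 := by
    intro X Y
    rw [EuclideanSpace.dist_eq, Real.sq_sqrt (by positivity)]
    simp [Fin.sum_univ_two, Real.dist_eq, sq_abs]
  have hr0 : 0 ≤ r := hB ▸ dist_nonneg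
  have hB2 : (B 0 - O 0) ^ 2 + (B 1 - O 1) ^ 2 = r ^ 2 := by
    rw [← dist_sq, hB]
  have hC2 : (C 0 - O 0) ^ 2 + (C 1 - O 1) ^ 2 = r ^ 2 := by
    rw [← dist_sq, hC]
  have hD2 : (D 0 - O 0) ^ 2 + (D 1 - O 1) ^ 2 = r ^ 2 := by
    rw [← dist_sq, hD]
  have hA2 : r ^ 2 < (A 0 - O 0) ^ 2 + (A 1 - O 1) ^ 2 := by
    rw [← dist_sq]
    exact pow_lt_pow_left₀ hout hr0 two_ne_zero
  -- the two inner products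
  obtain ⟨P1, hP1def⟩ : ∃ x : ℝ, x = (B 0 - A 0) * (C 0 - A 0) + (B 1 - A 1) * (C 1 - A 1) := ⟨_, rfl⟩
  obtain ⟨P2, hP2def⟩ : ∃ x : ℝ, x = (B 0 - D 0) * (C 0 - D 0) + (B 1 - D 1) * (C 1 - D 1) := ⟨_, rfl⟩
  -- nonzero distances
  have hABne : A ≠ B := fun h => hAs (h ▸ left_mem_affineSpan_pair ℝ B C)
  have hACne : A ≠ C := fun h => hAs (h ▸ right_mem_affineSpan_pair ℝ B C)
  have hDBne : D ≠ B := fun h => hDs (h ▸ left_mem_affineSpan_pair ℝ B C)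
  have hDCne : D ≠ C := fun h => hDs (h ▸ right_mem_affineSpan_pair ℝ B C)
  have hdBA : 0 < dist B A := dist_pos.mpr (Ne.symm hABne)
  have hdCA : 0 < dist C A := dist_pos.mpr (Ne.symm hACne)
  have hdBD : 0 < dist B D := dist_pos.mpr (Ne.symm hDBne)
  have hdCD : 0 < dist C D := dist_pos.mpr (Ne.symm hDCne)
  -- cosines in coordinates
  have cosA : Real.cos (∠ B A C) = P1 / (dist B A * dist C A) := by
    rw [EuclideanGeometry.angle, InnerProductGeometry.cos_angle,
      ← dist_eq_norm_vsub, ← dist_eq_norm_vsub]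
    congr 1
    simp [PiLp.inner_apply, Fin.sum_univ_two, hP1def]
    ring
  have cosD : Real.cos (∠ B D C) = P2 / (dist B D * dist C D) := by
    rw [EuclideanGeometry.angle, InnerProductGeometry.cos_angle,
      ← dist_eq_norm_vsub, ← dist_eq_norm_vsub]
    congr 1
    simp [PiLp.inner_apply, Fin.sum_univ_two, hP2def]
    ring
  -- product of distances as a square root (Lagrange identity)
  have hN1 : dist B A * dist C A = Real.sqrt (P1 ^ 2 + vA ^ 2) := by
    have hsq : (dist B A * dist C A) ^ 2 = P1 ^ 2 + vA ^ 2 := by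
      rw [mul_pow, dist_sq, dist_sq]
      simp only [hP1def, hvAdef, hw0, hw1]
      ring
    rw [← hsq, Real.sqrt_sq (by positivity)]
  have hN2 : dist B D * dist C D = Real.sqrt (P2 ^ 2 + vD ^ 2) := by
    have hsq : (dist B D * dist C D) ^ 2 = P2 ^ 2 + vD ^ 2 := by
      rw [mul_pow, dist_sq, dist_sq]
      simp only [hP2def, hvDdef, hw0, hw1]
      ring
    rw [← hsq, Real.sqrt_sq (by positivity)]
  -- power-of-a-point identities
  have idA : (w0 ^ 2 + w1 ^ 2) * P1
      = (w0 ^ 2 + w1 ^ 2) * (((A 0 - O 0) ^ 2 + (A 1 - O 1) ^ 2) - r ^ 2)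
        + 2 * vA * vO := by
    simp only [hP1def, hvAdef, hvOdef, hw0, hw1]
    linear_combination (-((C 0 - A 0) * (C 0 - B 0) + (C 1 - A 1) * (C 1 - B 1))) * hB2
      + (((B 0 - A 0) * (C 0 - B 0) + (B 1 - A 1) * (C 1 - B 1))) * hC2
  have idD : (w0 ^ 2 + w1 ^ 2) * P2 = 2 * vD * vO := by
    simp only [hP2def, hvDdef, hvOdef, hw0, hw1]
    linear_combination (-((C 0 - D 0) * (C 0 - B 0) + (C 1 - D 1) * (C 1 - B 1))) * hB2
      + (((B 0 - D 0) * (C 0 - B 0) + (B 1 - D 1) * (C 1 - B 1))) * hC2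
      + ((C 0 - B 0) ^ 2 + (C 1 - B 1) ^ 2) * hD2
  -- sign combination
  have habs0 : vA * |vD| + vD * |vA| = 0 := by
    rcases lt_trichotomy vA 0 with h | h | h
    · have hvDpos : 0 < vD := by nlinarith
      rw [abs_of_pos hvDpos, abs_of_neg h]; ring
    · exact absurd h hvA
    · have hvDneg : vD < 0 := by nlinarith
      rw [abs_of_neg hvDneg, abs_of_pos h]; ring
  have habsD : 0 < |vD| := abs_pos.mpr hvD
  have hkey : 0 < P1 * |vD| + P2 * |vA| := by
    have h1 : (w0 ^ 2 + w1 ^ 2) * (P1 * |vD| + P2 * |vA|)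
        = (w0 ^ 2 + w1 ^ 2) * (((A 0 - O 0) ^ 2 + (A 1 - O 1) ^ 2) - r ^ 2) * |vD|
          + 2 * vO * (vA * |vD| + vD * |vA|) := by
      linear_combination |vD| * idA + |vA| * idD
    rw [habs0, mul_zero, add_zero] at h1
    have h2 : 0 < (w0 ^ 2 + w1 ^ 2)
        * (((A 0 - O 0) ^ 2 + (A 1 - O 1) ^ 2) - r ^ 2) * |vD| := by
      apply mul_pos (mul_pos hL (by linarith)) habsD
    by_contra hcc
    push_neg at hcc
    have h4 : (w0 ^ 2 + w1 ^ 2) * (P1 * |vD| + P2 * |vA|) ≤ 0 :=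
      mul_nonpos_of_nonneg_of_nonpos hL.le hcc
    linarith [h1, h2, h4]
  -- main positivity of cosine sum
  have hcos : 0 < Real.cos (∠ B A C) + Real.cos (∠ B D C) := by
    rw [cosA, cosD, hN1, hN2]
    rw [div_add_div _ _ (by positivity) (by positivity)]
    apply div_pos
    · have := key_ineq P1 P2 vA vD hvA hvD hkey
      linarith [this]
    · positivity
  -- conclude
  by_contra hcon2
  push_neg at hcon2
  have h1 : π - ∠ B D C ≤ ∠ B A C := by linarith
  have h2 : 0 ≤ π - ∠ B D C := by linarith [EuclideanGeometry.angle_le_pi B D C]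
  have h3 : ∠ B A C ≤ π := EuclideanGeometry.angle_le_pi B A C
  have := Real.cos_le_cos_of_nonneg_of_le_pi h2 h3 h1
  rw [Real.cos_pi_sub] at this
  linarith
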